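/- Let I ⊂ ℝ be a finite interval with |I| = 1 and k : I × I → ℝ measurable with 0 < k₀ ≤ k(ξ,η) ≤ k₁. Let v : I → ℝ be bounded measurable with v ≥ 0, let α > 0, and suppose that α v(ξ) + ∫_I k(ξ,η)(v(ξ) − v(η)) dη ≤ 0 for all ξ ∈ I. Then v(ξ) = 0 for almost every ξ ∈ I. -/

import Mathlib

open MeasureTheory

/-- A nonnegative bounded measurable subsolution of α v + Θ v ≤ 0 vanishes a.e. -/
theorem stmt5 (I : Set ℝ) (hI : MeasurableSet I) (hvol : volume I = 1)
    (k : ℝ → ℝ → ℝ) (k₀ k₁ : ℝ) (hk₀ : 0 < k₀) (hk01 : k₀ < k₁)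
    (hmeas : Measurable (Function.uncurry k))
    (hbound : ∀ ξ ∈ I, ∀ η ∈ I, k₀ ≤ k ξ η ∧ k ξ η ≤ k₁)
    (v : ℝ → ℝ) (hvm : Measurable v) (C : ℝ) (hvb : ∀ ξ ∈ I, |v ξ| ≤ C)
    (hvnn : ∀ ξ ∈ I, 0 ≤ v ξ)
    (α : ℝ) (hα : 0 < α)
    (hsub : ∀ ξ ∈ I, α * v ξ + (∫ η in I, k ξ η * (v ξ - v η)) ≤ 0) :
    ∀ᵐ ξ ∂(volume.restrict I), v ξ = 0 := by
  have hIne : I.Nonempty := by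
    rcases I.eq_empty_or_nonempty with h | h
    · rw [h] at hvol; simp at hvol
    · exact h
  obtain ⟨ξ₀, hξ₀⟩ := hIne
  have hC : 0 ≤ C := le_trans (abs_nonneg _) (hvb ξ₀ hξ₀)
  set M := sSup (v '' I) with hM
  have hbdd : BddAbove (v '' I) := ⟨C, by
    rintro x ⟨ξ, hξ, rfl⟩; exact (abs_le.mp (hvb ξ hξ)).2⟩
  have hle : ∀ ξ ∈ I, v ξ ≤ M := fun ξ hξ => le_csSup hbdd ⟨ξ, hξ, rfl⟩
  have key : ∀ ε : ℝ, 0 < ε → α * M ≤ (α + k₁) * ε := by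
    intro ε hε
    obtain ⟨x, ⟨ξ, hξ, rfl⟩, hx⟩ :=
      exists_lt_of_lt_csSup (⟨v ξ₀, ξ₀, hξ₀, rfl⟩ : (v '' I).Nonempty) (show M - ε < M by linarith)
    have hkm : Measurable (k ξ) :=
      hmeas.comp (measurable_const.prodMk measurable_id)
    have hint : IntegrableOn (fun η => k ξ η * (v ξ - v η)) I volume := by
      apply Integrable.mono' (g := fun _ => k₁ * (2 * C))
        ((integrableOn_const_iff (C := k₁ * (2 * C))).mpr (Or.inr (hvol ▸ ENNReal.one_lt_top)))
      · exact (hkm.mul (measurable_const.sub hvm)).aestronglyMeasurable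
      · filter_upwards [ae_restrict_mem hI] with η hη
        have h1 := hbound ξ hξ η hη
        have h2 := abs_le.mp (hvb η hη)
        have h3 := abs_le.mp (hvb ξ hξ)
        have hk : |k ξ η| ≤ k₁ := by
          rw [abs_of_pos (by linarith [h1.1])]; exact h1.2
        have hv : |v ξ - v η| ≤ 2 * C := by
          rw [abs_le]; constructor <;> linarith [h2.1, h2.2, h3.1, h3.2]
        rw [Real.norm_eq_abs, abs_mul]
        nlinarith [abs_nonneg (k ξ η), abs_nonneg (v ξ - v η)]
    have hint2 : IntegrableOn (fun η => k ξ η * (v η - v ξ)) I volume :=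
      hint.neg.congr (Filter.Eventually.of_forall fun η => by
        show -(k ξ η * (v ξ - v η)) = _; ring)
    have hub : (∫ η in I, k ξ η * (v η - v ξ)) ≤ k₁ * ε := by
      have hmono := setIntegral_mono_on (g := fun _ => k₁ * ε) hint2
        ((integrableOn_const_iff (C := k₁ * ε)).mpr (Or.inr (by rw [hvol]; exact ENNReal.one_lt_top))) hI
        (fun η hη => ?_)
      · have hc : (∫ _ in I, (k₁ * ε : ℝ)) = k₁ * ε := by
          rw [setIntegral_const, measureReal_def, hvol]; simp
        calc (∫ η in I, k ξ η * (v η - v ξ)) ≤ ∫ _ in I, (k₁ * ε : ℝ) := hmono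
          _ = k₁ * ε := hc
      · have h1 := hbound ξ hξ η hη
        have hvη := hle η hη
        show k ξ η * (v η - v ξ) ≤ k₁ * ε
        rcases le_or_gt (v η - v ξ) 0 with h | h
        · have h2 : k ξ η * (v η - v ξ) ≤ 0 :=
            mul_nonpos_of_nonneg_of_nonpos (by linarith [h1.1]) h
          exact h2.trans (le_of_lt (mul_pos (hk₀.trans hk01) hε))
        · have hvd : v η - v ξ ≤ ε := by linarith
          exact mul_le_mul h1.2 hvd h.le (by linarith)
    have hneg : (∫ η in I, k ξ η * (v η - v ξ))
        = - ∫ η in I, k ξ η * (v ξ - v η) := by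
      rw [← integral_neg]; congr 1; funext η; ring
    have h0 := hsub ξ hξ
    have hαv : α * v ξ ≤ k₁ * ε := by
      have : α * v ξ ≤ ∫ η in I, k ξ η * (v η - v ξ) := by
        rw [hneg]; linarith
      linarith
    nlinarith
  have hM0 : M ≤ 0 := by
    by_contra h
    push_neg at h
    have hpos : 0 < α + k₁ := by linarith
    have := key (α * M / (2 * (α + k₁))) (by positivity)
    rw [mul_div_assoc'] at this
    have heq : (α + k₁) * (α * M) / (2 * (α + k₁)) = α * M / 2 := by
      field_simp
    rw [heq] at this
    nlinarith [mul_pos hα h]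
  have hz : ∀ ξ ∈ I, v ξ = 0 := fun ξ hξ =>
    le_antisymm ((hle ξ hξ).trans hM0) (hvnn ξ hξ)
  filter_upwards [ae_restrict_mem hI] with ξ hξ using hz ξ hξ
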